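/- Let 1 ≤ i ≤ n, let π be a connected decorated permutation of [n] with associated connected Grassmann necklace I, and let J be the connected Grassmann necklace associated to the connected decorated permutation LR^{2i}[π] defined by LR^{2i}[π](j) = 2i − π^{-1}(2i − j) (all values taken mod n in [n]). Then the exchange graphs G^I and G^J are isomorphic as simple graphs. -/

import Mathlib

open SimpleGraph

namespace WS

/-- Integers (elements of the cyclically ordered set `[n]`, identified with `Fin n`)
are *cyclically ordered* if some rotation of the list is strictly increasing. -/
def CyclicallyOrdered {n : ℕ} (l : List (Fin n)) : Prop :=
  ∃ k : ℕ, (l.rotate k).Pairwise (· < ·)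

/-- Two subsets of `[n]` are *weakly separated*. -/
def WeaklySeparated {n : ℕ} (A B : Finset (Fin n)) : Prop :=
  ¬ ∃ a b a' b' : Fin n, CyclicallyOrdered [a, b, a', b'] ∧
      a ∈ A \ B ∧ a' ∈ A \ B ∧ b ∈ B \ A ∧ b' ∈ B \ A

/-- The cyclic successor `i + 1` in `[n]`. -/
def cnext {n : ℕ} (i : Fin n) : Fin n := i + ⟨1 % n, Nat.mod_lt 1 i.pos⟩

/-- A (connected) Grassmann necklace. -/
def IsGrassmannNecklace {n : ℕ} (N : Fin n → Finset (Fin n)) : Prop :=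
  (∀ i j : Fin n, (N i).card = (N j).card) ∧
    (∀ i : Fin n, cnext i ∈ N (cnext i)) ∧ ∀ i : Fin n, N i \ {i} ⊆ N (cnext i)

/-- The linear order `<ᵢ` on `[n]` starting at `i`. -/
def cyclicLT {n : ℕ} (i a b : Fin n) : Prop := (a - i).val < (b - i).val

instance {n : ℕ} (i a b : Fin n) : Decidable (cyclicLT i a b) :=
  inferInstanceAs (Decidable ((a - i).val < (b - i).val))

/-- The Gale order `≤ᵢ` : comparing the sorted lists elementwise w.r.t. `≤ᵢ`. -/
def FinsetLE {n : ℕ} (i : Fin n) (A B : Finset (Fin n)) : Prop :=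
  List.Forall₂ (· ≤ ·) (Finset.sort (A.image fun x => x - i) (· ≤ ·))
    (Finset.sort (B.image fun x => x - i) (· ≤ ·))

/-- The positroid associated to a Grassmann necklace. -/
def positroid {n : ℕ} (N : Fin n → Finset (Fin n)) : Set (Finset (Fin n)) :=
  {J | (∀ i, J.card = (N i).card) ∧ ∀ i, FinsetLE i (N i) J}

/-- A weakly separated collection. -/
def IsWSC {n : ℕ} (W : Finset (Finset (Fin n))) : Prop :=
  ∀ A ∈ W, ∀ B ∈ W, WeaklySeparated A B

/-- A weakly separated collection over a Grassmann necklace. -/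
def IsWSCOver {n : ℕ} (N : Fin n → Finset (Fin n)) (W : Finset (Finset (Fin n))) : Prop :=
  IsWSC W ∧ ∀ A ∈ W, A ∈ positroid N

/-- A maximal weakly separated collection over a Grassmann necklace. -/
def IsMaxWSCOver {n : ℕ} (N : Fin n → Finset (Fin n)) (W : Finset (Finset (Fin n))) : Prop :=
  IsWSCOver N W ∧ ∀ W', IsWSCOver N W' → W ⊆ W' → W' = W

/-- `V ∪ {a, b}`. -/
def pairAdd {n : ℕ} (V : Finset (Fin n)) (a b : Fin n) : Finset (Fin n) :=
  insert a (insert b V)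

/-- `V₂` is obtained from `V₁` by a mutation. -/
def Mutation {n : ℕ} (V1 V2 : Finset (Finset (Fin n))) : Prop :=
  ∃ (V : Finset (Fin n)) (a b c d : Fin n),
    CyclicallyOrdered [a, b, c, d] ∧ a ∉ V ∧ b ∉ V ∧ c ∉ V ∧ d ∉ V ∧
    pairAdd V a b ∈ V1 ∧ pairAdd V b c ∈ V1 ∧ pairAdd V c d ∈ V1 ∧
    pairAdd V d a ∈ V1 ∧ pairAdd V a c ∈ V1 ∧
    V2 = insert (pairAdd V b d) (V1.erase (pairAdd V a c))

/-- The type of maximal weakly separated collections over `N`. -/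
abbrev MWSC {n : ℕ} (N : Fin n → Finset (Fin n)) : Type :=
  {W : Finset (Finset (Fin n)) // IsMaxWSCOver N W}

/-- The exchange graph of a Grassmann necklace. -/
def exchangeGraph {n : ℕ} (N : Fin n → Finset (Fin n)) : SimpleGraph (MWSC N) :=
  SimpleGraph.fromRel fun V1 V2 => Mutation V1.1 V2.1

/-- The type of maximal weakly separated collections over `N` containing `C`. -/
abbrev CMWSC {n : ℕ} (N : Fin n → Finset (Fin n)) (C : Finset (Finset (Fin n))) : Type :=
  {W : Finset (Finset (Fin n)) // IsMaxWSCOver N W ∧ C ⊆ W}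

/-- The `C`-constant graph `G^I(C)` : the induced subgraph of the exchange graph
on the maximal weakly separated collections containing `C`. -/
def constantGraph {n : ℕ} (N : Fin n → Finset (Fin n)) (C : Finset (Finset (Fin n))) :
    SimpleGraph (CMWSC N C) :=
  SimpleGraph.fromRel fun V1 V2 => Mutation V1.1 V2.1

/-- The set of distinct subsets appearing in the necklace. -/
def necklaceSet {n : ℕ} (N : Fin n → Finset (Fin n)) : Finset (Finset (Fin n)) :=
  Finset.univ.image N

/-- The necklace `N` has interior size `c`. -/
def HasInteriorSize {n : ℕ} (N : Fin n → Finset (Fin n)) (c : ℕ) : Prop :=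
  ∀ W, IsMaxWSCOver N W → W.card = (necklaceSet N).card + c

/-- The `C`-constant graph `G^I(C)` has co-dimension `c`. -/
def HasCodim {n : ℕ} (N : Fin n → Finset (Fin n)) (C : Finset (Finset (Fin n))) (c : ℕ) :
    Prop :=
  ∀ W, IsMaxWSCOver N W → W.card = C.card + c

/-- Two `k`-element subsets are quasi-adjacent if their intersection has `k - 1` elements. -/
def QuasiAdjacent {n : ℕ} (A B : Finset (Fin n)) : Prop :=
  A.card = B.card ∧ (A ∩ B).card + 1 = A.card

/-- The `C`-constant graph `G^I(C)` is applicable. -/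
def Applicable {n : ℕ} (N : Fin n → Finset (Fin n)) (C : Finset (Finset (Fin n))) : Prop :=
  ∀ V ∈ C, ∃ l : List (Finset (Fin n)),
    l.head? = some V ∧ (∀ W ∈ l, W ∈ C) ∧ List.Chain' QuasiAdjacent l ∧
    ∃ W ∈ necklaceSet N, l.getLast? = some W

/-- The necklace `N` is mutation-friendly: the intersection of all maximal weakly separated
collections over `N` is exactly the necklace. -/
def MutationFriendly {n : ℕ} (N : Fin n → Finset (Fin n)) : Prop :=
  ∀ A : Finset (Fin n), (∀ W, IsMaxWSCOver N W → A ∈ W) ↔ A ∈ necklaceSet N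

/-- The `C`-constant graph `G^I(C)` is mutation-friendly. -/
def CMutationFriendly {n : ℕ} (N : Fin n → Finset (Fin n)) (C : Finset (Finset (Fin n))) :
    Prop :=
  ∀ A : Finset (Fin n), (∀ W, IsMaxWSCOver N W → C ⊆ W → A ∈ W) ↔ A ∈ C

/-- The necklace `N` is very-mutation-friendly. -/
def VeryMutationFriendly {n : ℕ} (N : Fin n → Finset (Fin n)) : Prop :=
  MutationFriendly N ∧
    ∀ i : ℕ, HasInteriorSize N i →
      ∃ W : ℕ → Finset (Finset (Fin n)),
        (∀ j, 1 ≤ j → j ≤ i - 1 →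
            IsWSCOver N (W j) ∧ necklaceSet N ⊆ W j ∧
            (W j).card + j = i + (necklaceSet N).card ∧
            Applicable N (W j) ∧ CMutationFriendly N (W j)) ∧
        ∀ j, 1 ≤ j → j + 1 ≤ i - 1 → W (j + 1) ⊆ W j

/-- The circular interval `[i, j)` in `[n]`. -/
def circInterval {n : ℕ} (i j : Fin n) : Finset (Fin n) :=
  Finset.univ.filter fun x => (x - i).val < (j - i).val

/-- A connected decorated permutation. -/
def IsConnectedPerm {n : ℕ} (π : Equiv.Perm (Fin n)) : Prop :=
  ¬ ∃ i j : Fin n, i ≠ j ∧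
      (circInterval i j).image (fun x => π x) = circInterval i j ∧
      (circInterval j i).image (fun x => π x) = circInterval j i

/-- The Grassmann necklace associated to a decorated permutation:
`I_i = {j : j <ᵢ π⁻¹(j)}`. -/
def necklaceOfPerm {n : ℕ} (π : Equiv.Perm (Fin n)) : Fin n → Finset (Fin n) :=
  fun i => Finset.univ.filter fun j => cyclicLT i j (π⁻¹ j)

/-- `π` is the decorated permutation associated to the necklace `N`:
`π(i) = j` whenever `I_{i+1} = (I_i ∖ {i}) ∪ {j}`. -/
def IsDecoratedPermOf {n : ℕ} (π : Equiv.Perm (Fin n)) (N : Fin n → Finset (Fin n)) : Prop :=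
  ∀ i : Fin n, N (cnext i) = insert (π i) ((N i).erase i)

/-- The label-reflection operation `LR^{2i}[π](j) = 2i - π⁻¹(2i - j)`. -/
def LRop {n : ℕ} [NeZero n] (i : Fin n) (π : Equiv.Perm (Fin n)) : Equiv.Perm (Fin n) :=
  ((Equiv.subLeft (i + i)).trans (π⁻¹ : Equiv.Perm (Fin n))).trans
    (Equiv.subLeft (i + i))

/-- The between-label-reflection operation `BLR^{2i-1}[π](j) = (2i-1) - π⁻¹((2i-1) - j)`. -/
def BLRop {n : ℕ} [NeZero n] (i : Fin n) (π : Equiv.Perm (Fin n)) : Equiv.Perm (Fin n) :=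
  ((Equiv.subLeft (i + i - 1)).trans (π⁻¹ : Equiv.Perm (Fin n))).trans
    (Equiv.subLeft (i + i - 1))

/-- The rotation operation `R^i[π](j) = π(j - i) + i`. -/
def Rop {n : ℕ} [NeZero n] (i : Fin n) (π : Equiv.Perm (Fin n)) : Equiv.Perm (Fin n) :=
  ((Equiv.subRight i).trans π).trans (Equiv.addRight i)

/-- One step in generating the equivalence class of decorated permutations. -/
def PermStep {n : ℕ} [NeZero n] (π σ : Equiv.Perm (Fin n)) : Prop :=
  σ = π⁻¹ ∨ (∃ i : Fin n, σ = LRop i π) ∨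
    (Even n ∧ ∃ i : Fin n, σ = BLRop i π) ∨ ∃ i : Fin n, σ = Rop i π

/-- Two decorated permutations belong to the same equivalence class. -/
def PermEquiv {n : ℕ} [NeZero n] (π σ : Equiv.Perm (Fin n)) : Prop :=
  Relation.EqvGen PermStep π σ

/-- `σ` is the permutation `π₁ = 312` (on `[3]`, in `Fin 3` coordinates). -/
def IsStandardPermOne (σ : Equiv.Perm (Fin 3)) : Prop :=
  σ 1 = 0 ∧ σ 2 = 1 ∧ σ 0 = 2

/-- `σ` is the permutation `π_c` on `[2c]` (for `c ≥ 2`), in `Fin (2c)` coordinates,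
where the element `a ∈ [2c]` corresponds to `a % 2c : Fin (2c)`. -/
def IsStandardPerm (c : ℕ) (hc : 2 ≤ c) (σ : Equiv.Perm (Fin (2 * c))) : Prop :=
  ∀ a : ℕ, 1 ≤ a → a ≤ 2 * c →
    σ ⟨a % (2 * c), Nat.mod_lt _ (by omega)⟩ =
      ⟨(if a = 1 then 3
        else if a ≤ c then 2 * c + 1 - a
        else if a = c + 1 then 1
        else if a = c + 2 then 2
        else 2 * c + 3 - a) % (2 * c), Nat.mod_lt _ (by omega)⟩

/-- The decorated permutation `π` (on `[n]`) belongs to the equivalence class `𝒞_c`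
of the permutation `π_c`. -/
def InStandardClass (c : ℕ) {n : ℕ} (π : Equiv.Perm (Fin n)) : Prop :=
  (c = 1 ∧ ∃ h : n = 3, ∃ σ : Equiv.Perm (Fin 3),
      IsStandardPermOne σ ∧ PermEquiv ((finCongr h).permCongr π) σ) ∨
    ∃ hc : 2 ≤ c, ∃ h : n = 2 * c, ∃ σ : Equiv.Perm (Fin (2 * c)),
      IsStandardPerm c hc σ ∧
      @PermEquiv (2 * c) ⟨by omega⟩ ((finCongr h).permCongr π) σ

/-- The embedding of the elements of `[n]` into `[n + m - 2]` used in gluing (the element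
`n` of `[n]`, i.e. `0 : Fin n`, is sent to the element `n` of `[n + m - 2]`). -/
def glueEmbed {n m : ℕ} (hn : 3 ≤ n) (hm : 3 ≤ m) (v : Fin n) : Fin (n + m - 2) :=
  if h : v.val = 0 then ⟨n, by omega⟩ else ⟨v.val, by have := v.isLt; omega⟩

/-- The shifted embedding `b ↦ b + n - 2` of the elements of `[m]` into `[n + m - 2]`
used in gluing (the element `m` of `[m]`, i.e. `0 : Fin m`, is sent to the element
`n + m - 2`, i.e. `0 : Fin (n + m - 2)`). -/
def glueShift {n m : ℕ} (hn : 3 ≤ n) (hm : 3 ≤ m) (v : Fin m) : Fin (n + m - 2) :=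
  if h : v.val = 0 then ⟨0, by omega⟩ else ⟨v.val + n - 2, by have := v.isLt; omega⟩

/-- `π₃` is the decorated permutation of the glued Grassmann necklace `I □ J`, where
`π₁, π₂` are the decorated permutations of `I, J`. -/
def IsGluedPerm {n m : ℕ} (hn : 3 ≤ n) (hm : 3 ≤ m)
    (π1 : Equiv.Perm (Fin n)) (π2 : Equiv.Perm (Fin m))
    (π3 : Equiv.Perm (Fin (n + m - 2))) : Prop :=
  (∀ a : Fin n, a.val ≠ 0 → (π1 a).val ≠ 0 →
      π3 (glueEmbed hn hm a) = glueEmbed hn hm (π1 a)) ∧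
  (∀ a : Fin n, a.val ≠ 0 → (π1 a).val = 0 →
      π3 (glueEmbed hn hm a) = glueShift hn hm (π2 ⟨1, by omega⟩)) ∧
  (∀ a : Fin m, (a.val = 0 ∨ 3 ≤ a.val) → π2 a ≠ ⟨1, by omega⟩ →
      π3 (glueShift hn hm a) = glueShift hn hm (π2 a)) ∧
  (∀ a : Fin m, (a.val = 0 ∨ 3 ≤ a.val) → π2 a = ⟨1, by omega⟩ →
      π3 (glueShift hn hm a) = glueEmbed hn hm (π1 ⟨0, by omega⟩))

/-- The box product of an arbitrary family of simple graphs. -/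
def boxProdFamily {ι : Type*} {V : ι → Type*} (G : ∀ i, SimpleGraph (V i)) :
    SimpleGraph (∀ i, V i) where
  Adj v w := ∃ j, (G j).Adj (v j) (w j) ∧ ∀ l, l ≠ j → v l = w l
  symm := by
    refine ⟨?_⟩
    rintro v w ⟨j, h, hl⟩
    exact ⟨j, (G j).adj_symm h, fun l hlj => (hl l hlj).symm⟩
  loopless := by
    refine ⟨?_⟩
    rintro v ⟨j, h, -⟩
    exact (G j).loopless.irrefl _ h

section AuxLR
variable {n : ℕ} [NeZero n]
open Fin.CommRing

lemma npos : 0 < n := Nat.pos_of_ne_zero (NeZero.ne n)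

lemma sub_val (a b : Fin n) :
    (b - a).val = if a.val ≤ b.val then b.val - a.val else b.val + n - a.val := by
  rw [Fin.sub_def]
  dsimp only
  have hb := b.isLt
  have ha := a.isLt
  rcases le_or_gt a.val b.val with h | h
  · rw [if_pos h, show n - a.val + b.val = n + (b.val - a.val) from by omega,
      Nat.add_mod_left, Nat.mod_eq_of_lt (by omega)]
  · rw [if_neg (by omega), Nat.mod_eq_of_lt (by omega)]
    omega

def CO4 (a b c d : Fin n) : Prop :=
  0 < (b - a).val ∧ (b - a).val < (c - a).val ∧ (c - a).val < (d - a).val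

lemma co4_rot {a b c d : Fin n} (h : CO4 a b c d) : CO4 b c d a := by
  obtain ⟨h1, h2, h3⟩ := h
  have ha := a.isLt; have hb := b.isLt; have hc := c.isLt; have hd := d.isLt
  unfold CO4 at *
  rw [sub_val a b, sub_val a c, sub_val a d] at *
  rw [sub_val b c, sub_val b d, sub_val b a]
  split_ifs at * <;> omega

lemma co4_refl {a b c d : Fin n} (s : Fin n) (h : CO4 a b c d) :
    CO4 (s - d) (s - c) (s - b) (s - a) := by
  obtain ⟨h1, h2, h3⟩ := h
  have e1 : (s - c) - (s - d) = d - c := by ring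
  have e2 : (s - b) - (s - d) = d - b := by ring
  have e3 : (s - a) - (s - d) = d - a := by ring
  unfold CO4
  rw [e1, e2, e3]
  have ha := a.isLt; have hb := b.isLt; have hc := c.isLt; have hd := d.isLt
  rw [sub_val a b, sub_val a c, sub_val a d] at *
  rw [sub_val c d, sub_val b d]
  split_ifs at * <;> omega

lemma co4_ne {a b c d : Fin n} (h : CO4 a b c d) :
    a ≠ b ∧ a ≠ c ∧ a ≠ d ∧ b ≠ c ∧ b ≠ d ∧ c ≠ d := by
  obtain ⟨h1, h2, h3⟩ := h
  refine ⟨?_, ?_, ?_, ?_, ?_, ?_⟩ <;> intro hEq <;> subst hEq <;> simp_all <;> omega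

lemma sorted4_iff {a b c d : Fin n} :
    ([a, b, c, d] : List (Fin n)).Pairwise (· < ·) ↔
      a.val < b.val ∧ b.val < c.val ∧ c.val < d.val := by
  constructor
  · intro h
    simp only [List.pairwise_cons, List.mem_cons, List.mem_singleton, List.Pairwise.nil,
      List.not_mem_nil, forall_eq_or_imp, forall_eq, and_true, Fin.lt_def] at h
    omega
  · intro h
    simp only [List.pairwise_cons, List.mem_cons, List.mem_singleton, List.Pairwise.nil,
      List.not_mem_nil, forall_eq_or_imp, forall_eq, and_true, Fin.lt_def, false_implies,
      implies_true]
    omega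

lemma cyclic4_iff {a b c d : Fin n} :
    CyclicallyOrdered [a, b, c, d] ↔ CO4 a b c d := by
  have ha := a.isLt; have hb := b.isLt; have hc := c.isLt; have hd := d.isLt
  have r1 : ([a, b, c, d] : List (Fin n)).rotate 1 = [b, c, d, a] := rfl
  have r2 : ([a, b, c, d] : List (Fin n)).rotate 2 = [c, d, a, b] := rfl
  have r3 : ([a, b, c, d] : List (Fin n)).rotate 3 = [d, a, b, c] := rfl
  constructor
  · rintro ⟨k, hk⟩
    have hlen : ([a, b, c, d] : List (Fin n)).length = 4 := rfl
    rw [← List.rotate_mod, hlen] at hk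
    have h4 : k % 4 = 0 ∨ k % 4 = 1 ∨ k % 4 = 2 ∨ k % 4 = 3 := by omega
    unfold CO4
    rw [sub_val a b, sub_val a c, sub_val a d]
    rcases h4 with h | h | h | h <;> rw [h] at hk
    · rw [List.rotate_zero, sorted4_iff] at hk; split_ifs <;> omega
    · rw [r1, sorted4_iff] at hk; split_ifs <;> omega
    · rw [r2, sorted4_iff] at hk; split_ifs <;> omega
    · rw [r3, sorted4_iff] at hk; split_ifs <;> omega
  · rintro ⟨h1, h2, h3⟩
    rw [sub_val a b] at h1
    rw [sub_val a b, sub_val a c] at h2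
    rw [sub_val a c, sub_val a d] at h3
    rcases lt_or_ge b.val a.val with hba | hba
    · exact ⟨1, by rw [r1, sorted4_iff]; split_ifs at h1 h2 h3 <;> omega⟩
    · rcases lt_or_ge c.val a.val with hca | hca
      · exact ⟨2, by rw [r2, sorted4_iff]; split_ifs at h1 h2 h3 <;> omega⟩
      · rcases lt_or_ge d.val a.val with hda | hda
        · exact ⟨3, by rw [r3, sorted4_iff]; split_ifs at h1 h2 h3 <;> omega⟩
        · exact ⟨0, by rw [List.rotate_zero, sorted4_iff]; split_ifs at h1 h2 h3 <;> omega⟩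

lemma forall2_iff_count {α : Type*} [LinearOrder α] :
    ∀ (l₁ l₂ : List α), l₁.Pairwise (· ≤ ·) → l₂.Pairwise (· ≤ ·) → l₁.length = l₂.length →
      (List.Forall₂ (· ≤ ·) l₁ l₂ ↔
        ∀ t : α, l₂.countP (fun x => decide (x ≤ t)) ≤ l₁.countP (fun x => decide (x ≤ t))) := by
  intro l₁
  induction l₁ with
  | nil =>
    intro l₂ _ _ hlen
    cases l₂ with
    | nil => simp
    | cons b l₂ => simp at hlen
  | cons a l₁ ih =>
    intro l₂ hs₁ hs₂ hlen
    cases l₂ with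
    | nil => simp at hlen
    | cons b l₂ =>
      rw [List.pairwise_cons] at hs₁ hs₂
      have hlen' : l₁.length = l₂.length := by simpa using hlen
      constructor
      · intro h t
        rw [List.forall₂_cons] at h
        obtain ⟨hab, h⟩ := h
        have := (ih l₂ hs₁.2 hs₂.2 hlen').mp h t
        rw [List.countP_cons, List.countP_cons]
        by_cases hbt : b ≤ t
        · have hat : a ≤ t := le_trans hab hbt
          simp [hbt, hat]
          omega
        · simp [hbt]
          omega
      · intro h
        have hab : a ≤ b := by
          by_contra hab
          push_neg at hab
          have hc := h b
          rw [List.countP_cons, List.countP_cons] at hc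
          have h1 : l₁.countP (fun x => decide (x ≤ b)) = 0 := by
            rw [List.countP_eq_zero]
            intro x hx
            simp only [decide_eq_true_eq]
            exact fun hxb => absurd (le_trans (hs₁.1 x hx) hxb) (not_le.mpr hab)
          simp only [decide_eq_true_eq] at hc
          rw [h1, if_neg (not_le.mpr hab), if_pos le_rfl] at hc
          omega
        refine List.Forall₂.cons hab ((ih l₂ hs₁.2 hs₂.2 hlen').mpr ?_)
        intro t
        have hc := h t
        rw [List.countP_cons, List.countP_cons] at hc
        simp only [decide_eq_true_eq] at hc
        by_cases hbt : b ≤ t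
        · by_cases hat : a ≤ t
          · rw [if_pos hbt, if_pos hat] at hc; omega
          · have h1 : l₁.countP (fun x => decide (x ≤ t)) = 0 := by
              rw [List.countP_eq_zero]
              intro x hx
              simp only [decide_eq_true_eq]
              exact fun hxt => hat (le_trans (hs₁.1 x hx) hxt)
            rw [if_pos hbt, if_neg hat] at hc
            omega
        · have h2 : l₂.countP (fun x => decide (x ≤ t)) = 0 := by
            rw [List.countP_eq_zero]
            intro x hx
            simp only [decide_eq_true_eq]
            exact fun hxt => hbt (le_trans (hs₂.1 x hx) hxt)
          rw [h2]
          omega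

lemma countP_sort {α : Type*} [LinearOrder α] (S : Finset α) (p : α → Prop) [DecidablePred p] :
    (Finset.sort S (· ≤ ·)).countP (fun x => decide (p x)) = (S.filter p).card := by
  rw [(Finset.sort_perm_toList S (· ≤ ·)).countP_eq]
  have h1 : (S.toList : Multiset α) = S.val := Finset.coe_toList S
  have h2 : S.toList.countP (fun x => decide (p x)) = Multiset.countP p S.val := by
    rw [← h1, Multiset.coe_countP]
  rw [h2, Multiset.countP_eq_card_filter]
  rfl

def cnt (u t : Fin n) (S : Finset (Fin n)) : ℕ :=
  (S.filter fun x => x - u ≤ t).card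

lemma filter_image_card (u t : Fin n) (S : Finset (Fin n)) :
    ((S.image fun x => x - u).filter fun y => y ≤ t).card = cnt u t S := by
  have hinj : Function.Injective (fun x : Fin n => x - u) := sub_left_injective
  rw [Finset.filter_image]
  exact Finset.card_image_of_injective _ hinj

lemma finsetLE_iff_cnt (u : Fin n) (A B : Finset (Fin n)) (h : A.card = B.card) :
    FinsetLE u A B ↔ ∀ t : Fin n, cnt u t B ≤ cnt u t A := by
  have hinj : Function.Injective (fun x : Fin n => x - u) := sub_left_injective
  have hlen : (Finset.sort (A.image fun x => x - u) (· ≤ ·)).length =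
      (Finset.sort (B.image fun x => x - u) (· ≤ ·)).length := by
    rw [Finset.length_sort, Finset.length_sort,
      Finset.card_image_of_injective _ hinj, Finset.card_image_of_injective _ hinj, h]
  rw [FinsetLE, forall2_iff_count _ _ (Finset.pairwise_sort _ _) (Finset.pairwise_sort _ _) hlen]
  constructor
  · intro hf t
    have := hf t
    rwa [countP_sort, countP_sort, filter_image_card, filter_image_card] at this
  · intro hf t
    rw [countP_sort, countP_sort, filter_image_card, filter_image_card]
    exact hf t

lemma card_filter_equiv (e : Equiv.Perm (Fin n)) (p : Fin n → Prop) [DecidablePred p] :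
    (Finset.univ.filter fun x => p (e x)).card = (Finset.univ.filter p).card := by
  have h : Finset.univ.filter (fun x => p (e x)) =
      (Finset.univ.filter p).map e.symm.toEmbedding := by
    ext x
    simp only [Finset.mem_filter, Finset.mem_univ, true_and, Finset.mem_map,
      Equiv.coe_toEmbedding]
    constructor
    · intro hx
      exact ⟨e x, hx, e.symm_apply_apply x⟩
    · rintro ⟨y, hy, rfl⟩
      rwa [e.apply_symm_apply]
  rw [h, Finset.card_map]

lemma count_eq (π : Equiv.Perm (Fin n)) (u v : Fin n) :
    (Finset.univ.filter fun y : Fin n =>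
        (v - y).val < (v - π y).val ∧ (y - u).val ≤ (v - u).val).card =
      (Finset.univ.filter fun y : Fin n =>
        (π y - u).val < (y - u).val ∧ (π y - u).val ≤ (v - u).val).card := by
  set P : Fin n → Prop := fun y => (v - y).val < (v - π y).val with hP
  set Q : Fin n → Prop := fun y => (π y - u).val < (y - u).val with hQ
  set M : Fin n → Prop := fun y => (y - u).val ≤ (v - u).val with hM
  set M' : Fin n → Prop := fun y => (π y - u).val ≤ (v - u).val with hM'
  have hu := u.isLt; have hv := v.isLt
  have key1 : ∀ y, M y → M' y → (P y ↔ Q y) := by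
    intro y hm hm'
    simp only [hP, hQ, hM, hM'] at *
    have hy := y.isLt; have hpy := (π y).isLt
    rw [sub_val y v, sub_val (π y) v, sub_val u (π y), sub_val u y, sub_val u v] at *
    split_ifs at * <;> omega
  have key2 : ∀ y, M y → ¬ M' y → P y := by
    intro y hm hm'
    simp only [hP, hM, hM'] at *
    have hy := y.isLt; have hpy := (π y).isLt
    rw [sub_val y v, sub_val (π y) v, sub_val u (π y), sub_val u y, sub_val u v] at *
    split_ifs at * <;> omega
  have key3 : ∀ y, M' y → ¬ M y → Q y := by
    intro y hm' hm
    simp only [hQ, hM, hM'] at *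
    have hy := y.isLt; have hpy := (π y).isLt
    rw [sub_val u (π y), sub_val u y, sub_val u v] at *
    split_ifs at * <;> omega
  -- card bookkeeping
  classical
  have splitA := Finset.card_filter_add_card_filter_not
    (s := Finset.univ.filter fun y => P y ∧ M y) (p := M')
  have splitB := Finset.card_filter_add_card_filter_not
    (s := Finset.univ.filter fun y => Q y ∧ M' y) (p := M)
  have splitM := Finset.card_filter_add_card_filter_not
    (s := Finset.univ.filter M) (p := M')
  have splitM' := Finset.card_filter_add_card_filter_not
    (s := Finset.univ.filter M') (p := M)
  rw [Finset.filter_filter, Finset.filter_filter] at splitA splitB splitM splitM'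
  have e1 : Finset.univ.filter (fun y => (P y ∧ M y) ∧ M' y) =
      Finset.univ.filter (fun y => (Q y ∧ M' y) ∧ M y) := by
    apply Finset.filter_congr
    intro y _
    constructor
    · rintro ⟨⟨hp, hm⟩, hm'⟩; exact ⟨⟨(key1 y hm hm').mp hp, hm'⟩, hm⟩
    · rintro ⟨⟨hq, hm'⟩, hm⟩; exact ⟨⟨(key1 y hm hm').mpr hq, hm⟩, hm'⟩
  have e2 : Finset.univ.filter (fun y => (P y ∧ M y) ∧ ¬ M' y) =
      Finset.univ.filter (fun y => M y ∧ ¬ M' y) := by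
    apply Finset.filter_congr
    intro y _
    constructor
    · rintro ⟨⟨_, hm⟩, hm'⟩; exact ⟨hm, hm'⟩
    · rintro ⟨hm, hm'⟩; exact ⟨⟨key2 y hm hm', hm⟩, hm'⟩
  have e3 : Finset.univ.filter (fun y => (Q y ∧ M' y) ∧ ¬ M y) =
      Finset.univ.filter (fun y => M' y ∧ ¬ M y) := by
    apply Finset.filter_congr
    intro y _
    constructor
    · rintro ⟨⟨_, hm'⟩, hm⟩; exact ⟨hm', hm⟩
    · rintro ⟨hm', hm⟩; exact ⟨⟨key3 y hm' hm, hm'⟩, hm⟩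
  have e4 : Finset.univ.filter (fun y => M y ∧ M' y) =
      Finset.univ.filter (fun y => M' y ∧ M y) := by
    apply Finset.filter_congr
    intro y _
    exact and_comm
  have e5 : (Finset.univ.filter M').card = (Finset.univ.filter M).card := by
    exact card_filter_equiv π M
  show (Finset.univ.filter fun y => P y ∧ M y).card =
    (Finset.univ.filter fun y => Q y ∧ M' y).card
  rw [e1, e2] at splitA
  rw [e3] at splitB
  rw [e4] at splitM
  omega

lemma lrop_inv (i : Fin n) (π : Equiv.Perm (Fin n)) (x : Fin n) :
    (LRop i π)⁻¹ x = (i + i) - π ((i + i) - x) := by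
  apply Equiv.injective (LRop i π)
  rw [Equiv.Perm.coe_inv, Equiv.apply_symm_apply]
  simp [LRop, Equiv.subLeft_apply, sub_sub_cancel]

lemma interval_iff (u v y : Fin n) :
    (v - y).val ≤ (v - u).val ↔ (y - u).val ≤ (v - u).val := by
  have hu := u.isLt; have hv := v.isLt; have hy := y.isLt
  rw [sub_val y v, sub_val u y, sub_val u v]
  split_ifs <;> omega

lemma necklace_count (i : Fin n) (π : Equiv.Perm (Fin n)) (u v : Fin n) :
    cnt (i + i - v) (v - u) (necklaceOfPerm (LRop i π) (i + i - v)) =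
      cnt u (v - u) (necklaceOfPerm π u) := by
  set s : Fin n := i + i with hs
  unfold cnt necklaceOfPerm
  rw [Finset.filter_filter, Finset.filter_filter]
  show (Finset.univ.filter fun x : Fin n =>
      (x - (s - v)).val < ((LRop i π)⁻¹ x - (s - v)).val ∧ x - (s - v) ≤ v - u).card =
    (Finset.univ.filter fun x : Fin n =>
      (x - u).val < ((π⁻¹ x : Fin n) - u).val ∧ x - u ≤ v - u).card
  have lhs_eq : (Finset.univ.filter fun x : Fin n =>
      (x - (s - v)).val < ((LRop i π)⁻¹ x - (s - v)).val ∧ x - (s - v) ≤ v - u) =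
      Finset.univ.filter fun x : Fin n =>
        (v - (s - x)).val < (v - π (s - x)).val ∧ ((s - x) - u).val ≤ (v - u).val := by
    apply Finset.filter_congr
    intro x _
    rw [lrop_inv]
    have e1 : x - (s - v) = v - (s - x) := by ring
    have e2 : s - π (s - x) - (s - v) = v - π (s - x) := by ring
    rw [e1, e2, Fin.le_def]
    have e3 : (v - u : Fin n).val = (v - u).val := rfl
    rw [interval_iff u v (s - x)]
  rw [lhs_eq]
  have lhs_card : (Finset.univ.filter fun x : Fin n =>
      (v - (s - x)).val < (v - π (s - x)).val ∧ ((s - x) - u).val ≤ (v - u).val).card =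
      (Finset.univ.filter fun y : Fin n =>
        (v - y).val < (v - π y).val ∧ (y - u).val ≤ (v - u).val).card :=
    card_filter_equiv (Equiv.subLeft s)
      (fun y => (v - y).val < (v - π y).val ∧ (y - u).val ≤ (v - u).val)
  rw [lhs_card, count_eq π u v]
  have rhs_card : (Finset.univ.filter fun y : Fin n =>
      ((π y) - u).val < ((y : Fin n) - u).val ∧ ((π y) - u).val ≤ (v - u).val).card =
      (Finset.univ.filter fun x : Fin n =>
        (x - u).val < ((π⁻¹ x : Fin n) - u).val ∧ x - u ≤ v - u).card := by
    have h := card_filter_equiv π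
      (fun x => (x - u).val < ((π⁻¹ x : Fin n) - u).val ∧ x - u ≤ v - u)
    rw [← h]
    congr 1
    apply Finset.filter_congr
    intro y _
    rw [Equiv.Perm.coe_inv, Equiv.symm_apply_apply, Fin.le_def]
  rw [rhs_card]

lemma val_neg_one : ((-1 : Fin n)).val = n - 1 := by
  have hn : 0 < n := npos
  rw [Fin.neg_def]
  dsimp only
  rw [Fin.val_one']
  rcases Nat.lt_or_ge 1 n with h | h
  · have h1 : 1 % n = 1 := Nat.mod_eq_of_lt h
    rw [h1, Nat.mod_eq_of_lt (by omega)]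
  · have hone : n = 1 := by omega
    subst hone
    rfl

lemma cnt_neg_one (u : Fin n) (S : Finset (Fin n)) : cnt u (-1) S = S.card := by
  unfold cnt
  rw [Finset.filter_true_of_mem]
  intro x _
  rw [Fin.le_def, val_neg_one]
  have := (x - u).isLt
  omega

lemma cnt_map (u' t s : Fin n) (J : Finset (Fin n)) :
    cnt u' t (J.map (Equiv.subLeft s).toEmbedding) =
      (J.filter fun y => (s - y) - u' ≤ t).card := by
  unfold cnt
  rw [Finset.filter_map, Finset.card_map]
  congr 1

lemma necklace_card (i : Fin n) (π : Equiv.Perm (Fin n)) (j : Fin n) :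
    (necklaceOfPerm (LRop i π) j).card = (necklaceOfPerm π (i + i - j + 1)).card := by
  set s : Fin n := i + i with hs
  have h := necklace_count i π (s - j + 1) (s - j)
  have e1 : s - (s - j) = j := by ring
  have e2 : (s - j) - (s - j + 1) = -1 := by ring
  rw [e1, e2, cnt_neg_one, cnt_neg_one] at h
  exact h

lemma positroid_reflect (i : Fin n) (π : Equiv.Perm (Fin n)) (J : Finset (Fin n)) :
    J ∈ positroid (necklaceOfPerm π) ↔
      J.map (Equiv.subLeft (i + i)).toEmbedding ∈ positroid (necklaceOfPerm (LRop i π)) := by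
  set s : Fin n := i + i with hs
  set N : Fin n → Finset (Fin n) := necklaceOfPerm π with hN
  set N' : Fin n → Finset (Fin n) := necklaceOfPerm (LRop i π) with hN'
  set rJ : Finset (Fin n) := J.map (Equiv.subLeft s).toEmbedding with hrJ
  have hcards : rJ.card = J.card := Finset.card_map _
  have hcard_iff : (∀ a, J.card = (N a).card) ↔ (∀ a, rJ.card = (N' a).card) := by
    constructor
    · intro h a
      rw [hcards, necklace_card i π a]
      exact h _
    · intro h a
      have h2 := h (s - (a - 1))
      rw [hcards, necklace_card i π (s - (a - 1))] at h2
      have e : s - (s - (a - 1)) + 1 = a := by ring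
      rwa [e] at h2
  -- key: cnt translation for rJ
  have cnt_rJ : ∀ (v t : Fin n), cnt (s - v) t rJ = cnt (v - t) t J := by
    intro v t
    rw [hrJ, cnt_map]
    unfold cnt
    congr 1
    apply Finset.filter_congr
    intro y _
    have e1 : (s - y) - (s - v) = v - y := by ring
    rw [e1, Fin.le_def, Fin.le_def]
    have e2 : v - (v - t) = t := by ring
    have h3 := interval_iff (v - t) v y
    rw [e2] at h3
    exact h3
  constructor
  · rintro ⟨hcard, hle⟩
    refine ⟨hcard_iff.mp hcard, ?_⟩
    intro j
    have hc : (N' j).card = rJ.card := ((hcard_iff.mp hcard) j).symm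
    rw [finsetLE_iff_cnt _ _ _ hc]
    intro t
    -- j = s - v with v := s - j
    have hj : j = s - (s - j) := by ring
    rw [hj, cnt_rJ (s - j) t]
    have h6 := necklace_count i π ((s - j) - t) (s - j)
    have e3 : (s - j) - ((s - j) - t) = t := by ring
    rw [e3] at h6
    rw [h6]
    have hcu : (N ((s - j) - t)).card = J.card := (hcard ((s - j) - t)).symm
    exact (finsetLE_iff_cnt _ _ _ hcu).mp (hle _) t
  · rintro ⟨hcard, hle⟩
    have hcardJ : ∀ a, J.card = (N a).card := hcard_iff.mpr hcard
    refine ⟨hcardJ, ?_⟩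
    intro u
    have hcu : (N u).card = J.card := (hcardJ u).symm
    rw [finsetLE_iff_cnt _ _ _ hcu]
    intro t
    have h6 := necklace_count i π u (u + t)
    have e3 : (u + t) - u = t := by ring
    rw [e3] at h6
    rw [← h6]
    have h7 := cnt_rJ (u + t) t
    have e4 : (u + t) - t = u := by ring
    rw [e4] at h7
    rw [← h7]
    have hc : (N' (s - (u + t))).card = rJ.card := (hcard (s - (u + t))).symm
    exact (finsetLE_iff_cnt _ _ _ hc).mp (hle _) t

section Refl
variable (s : Fin n)

def Fm (s : Fin n) (A : Finset (Fin n)) : Finset (Fin n) :=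
  A.map (Equiv.subLeft s).toEmbedding

lemma Fm_mem {A : Finset (Fin n)} {x : Fin n} : x ∈ Fm s A ↔ s - x ∈ A := by
  rw [Fm, Finset.mem_map_equiv]
  have h : (Equiv.subLeft s).symm x = s - x := by
    show -x + s = s - x
    rw [neg_add_eq_sub]
  rw [h]

lemma Fm_invol (A : Finset (Fin n)) : Fm s (Fm s A) = A := by
  ext x
  rw [Fm_mem, Fm_mem, sub_sub_cancel]

lemma Fm_inj : Function.Injective (Fm s) :=
  Function.LeftInverse.injective (Fm_invol s)

def Gm (s : Fin n) (W : Finset (Finset (Fin n))) : Finset (Finset (Fin n)) :=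
  W.image (Fm s)

lemma Gm_mem {W : Finset (Finset (Fin n))} {A : Finset (Fin n)} :
    A ∈ Gm s W ↔ Fm s A ∈ W := by
  rw [Gm, Finset.mem_image]
  constructor
  · rintro ⟨B, hB, rfl⟩
    rwa [Fm_invol]
  · intro h
    exact ⟨Fm s A, h, Fm_invol s A⟩

lemma Gm_invol (W : Finset (Finset (Fin n))) : Gm s (Gm s W) = W := by
  ext A
  rw [Gm_mem, Gm_mem, Fm_invol]

lemma ws_reflect {A B : Finset (Fin n)} (h : WeaklySeparated A B) :
    WeaklySeparated (Fm s A) (Fm s B) := by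
  rintro ⟨a, b, a', b', hco, ha, ha', hb, hb'⟩
  rw [Finset.mem_sdiff, Fm_mem, Fm_mem] at ha ha' hb hb'
  apply h
  refine ⟨s - a', s - b, s - a, s - b', ?_, ?_, ?_, ?_, ?_⟩
  · exact cyclic4_iff.mpr (co4_rot (co4_refl s (cyclic4_iff.mp hco)))
  · exact Finset.mem_sdiff.mpr ha'
  · exact Finset.mem_sdiff.mpr ha
  · exact Finset.mem_sdiff.mpr hb
  · exact Finset.mem_sdiff.mpr hb'

lemma wsc_reflect {W : Finset (Finset (Fin n))} (h : IsWSC W) : IsWSC (Gm s W) := by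
  intro A hA B hB
  rw [Gm_mem] at hA hB
  have := ws_reflect s (h _ hA _ hB)
  rwa [Fm_invol, Fm_invol] at this

lemma Fm_pair (V : Finset (Fin n)) (x y : Fin n) :
    Fm s (pairAdd V x y) = pairAdd (Fm s V) (s - x) (s - y) := by
  unfold pairAdd Fm
  rw [Finset.map_insert, Finset.map_insert]
  rfl

lemma pair_comm (V : Finset (Fin n)) (x y : Fin n) :
    pairAdd V x y = pairAdd V y x := Finset.insert_comm x y V

lemma mem_pair {V : Finset (Fin n)} {x y z : Fin n} :
    z ∈ pairAdd V x y ↔ z = x ∨ z = y ∨ z ∈ V := by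
  simp [pairAdd]

lemma mutation_reflect {V1 V2 : Finset (Finset (Fin n))} (hWS : IsWSC V1)
    (hm : Mutation V1 V2) : Mutation (Gm s V2) (Gm s V1) := by
  obtain ⟨V, a, b, c, d, hco, haV, hbV, hcV, hdV, h1, h2, h3, h4, h5, hV2⟩ := hm
  have hCO := cyclic4_iff.mp hco
  obtain ⟨hab, hac, had, hbc, hbd, hcd⟩ := co4_ne hCO
  -- Pbd ∉ V1
  have hPbd : pairAdd V b d ∉ V1 := by
    intro hmem
    apply hWS _ h5 _ hmem
    refine ⟨a, b, c, d, hco, ?_, ?_, ?_, ?_⟩ <;> rw [Finset.mem_sdiff, mem_pair, mem_pair]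
    · exact ⟨Or.inl rfl, by push_neg; exact ⟨hab, had, haV⟩⟩
    · exact ⟨Or.inr (Or.inl rfl), by push_neg; exact ⟨fun h => hbc h.symm, hcd, hcV⟩⟩
    · exact ⟨Or.inl rfl, by push_neg; exact ⟨fun h => hab h.symm, hbc, hbV⟩⟩
    · exact ⟨Or.inr (Or.inl rfl), by push_neg; exact ⟨fun h => had h.symm, fun h => hcd h.symm, hdV⟩⟩
  -- set-level equation
  have hV1eq : V1 = insert (pairAdd V a c) (V2.erase (pairAdd V b d)) := by
    rw [hV2, Finset.erase_insert, Finset.insert_erase h5]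
    intro hmem
    exact hPbd (Finset.mem_of_mem_erase hmem)
  refine ⟨Fm s V, s - d, s - c, s - b, s - a,
    cyclic4_iff.mpr (co4_refl s hCO), ?_, ?_, ?_, ?_, ?_, ?_, ?_, ?_, ?_, ?_⟩
  · rw [Fm_mem, sub_sub_cancel]; exact hdV
  · rw [Fm_mem, sub_sub_cancel]; exact hcV
  · rw [Fm_mem, sub_sub_cancel]; exact hbV
  · rw [Fm_mem, sub_sub_cancel]; exact haV
  · -- pairAdd (Fm V) (s-d) (s-c) = Fm Pdc = Fm Pcd ∈ Gm V2
    rw [← Fm_pair, Gm_mem, Fm_invol, pair_comm]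
    rw [hV2]
    apply Finset.mem_insert_of_mem
    rw [Finset.mem_erase]
    refine ⟨?_, h3⟩
    intro hEq
    have : d ∈ pairAdd V a c := hEq ▸ (mem_pair.mpr (Or.inr (Or.inl rfl)))
    rw [mem_pair] at this
    rcases this with h | h | h
    · exact had h.symm
    · exact hcd h.symm
    · exact hdV h
  · rw [← Fm_pair, Gm_mem, Fm_invol, pair_comm]
    rw [hV2]
    apply Finset.mem_insert_of_mem
    rw [Finset.mem_erase]
    refine ⟨?_, h2⟩
    intro hEq
    have : b ∈ pairAdd V a c := hEq ▸ (mem_pair.mpr (Or.inl rfl))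
    rw [mem_pair] at this
    rcases this with h | h | h
    · exact hab h.symm
    · exact hbc h
    · exact hbV h
  · rw [← Fm_pair, Gm_mem, Fm_invol, pair_comm]
    rw [hV2]
    apply Finset.mem_insert_of_mem
    rw [Finset.mem_erase]
    refine ⟨?_, h1⟩
    intro hEq
    have : b ∈ pairAdd V a c := hEq ▸ (mem_pair.mpr (Or.inr (Or.inl rfl)))
    rw [mem_pair] at this
    rcases this with h | h | h
    · exact hab h.symm
    · exact hbc h
    · exact hbV h
  · rw [← Fm_pair, Gm_mem, Fm_invol, pair_comm]
    rw [hV2]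
    apply Finset.mem_insert_of_mem
    rw [Finset.mem_erase]
    refine ⟨?_, h4⟩
    intro hEq
    have : d ∈ pairAdd V a c := hEq ▸ (mem_pair.mpr (Or.inl rfl))
    rw [mem_pair] at this
    rcases this with h | h | h
    · exact had h.symm
    · exact hcd h.symm
    · exact hdV h
  · -- a* c* pair: Fm Pdb = Fm Pbd ∈ Gm V2
    rw [← Fm_pair, Gm_mem, Fm_invol, pair_comm, hV2]
    exact Finset.mem_insert_self _ _
  · -- Gm V1 = insert (pairAdd (Fm V) (s-c) (s-a)) ((Gm V2).erase (pairAdd (Fm V) (s-d) (s-b)))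
    rw [← Fm_pair, ← Fm_pair]
    have e1 : pairAdd V c a = pairAdd V a c := pair_comm _ _ _
    have e2 : pairAdd V d b = pairAdd V b d := pair_comm _ _ _
    rw [e1, e2]
    rw [hV1eq]
    show Gm s (insert (pairAdd V a c) (V2.erase (pairAdd V b d))) = _
    rw [Gm, Finset.image_insert, ← Gm]
    congr 1
    rw [Gm, Finset.image_erase (Fm_inj s), ← Gm]
end Refl

variable (i : Fin n) (π : Equiv.Perm (Fin n))

lemma wscover_reflect {W : Finset (Finset (Fin n))} :
    IsWSCOver (necklaceOfPerm π) W ↔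
      IsWSCOver (necklaceOfPerm (LRop i π)) (Gm (i + i) W) := by
  constructor
  · rintro ⟨hwsc, hpos⟩
    refine ⟨wsc_reflect _ hwsc, ?_⟩
    intro A hA
    rw [Gm_mem] at hA
    have h1 := hpos _ hA
    have h2 := (positroid_reflect i π (Fm (i + i) A)).mp h1
    have h3 : (Fm (i + i) A).map (Equiv.subLeft (i + i)).toEmbedding = A := Fm_invol _ A
    rwa [h3] at h2
  · rintro ⟨hwsc, hpos⟩
    constructor
    · have h := wsc_reflect (i + i) hwsc
      rwa [Gm_invol] at h
    · intro A hA
      have hA' : Fm (i + i) A ∈ Gm (i + i) W := by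
        rw [Gm_mem, Fm_invol]; exact hA
      exact (positroid_reflect i π A).mpr (hpos _ hA')

lemma maxwsc_reflect {W : Finset (Finset (Fin n))} :
    IsMaxWSCOver (necklaceOfPerm π) W ↔
      IsMaxWSCOver (necklaceOfPerm (LRop i π)) (Gm (i + i) W) := by
  constructor
  · rintro ⟨hover, hmax⟩
    refine ⟨(wscover_reflect i π).mp hover, ?_⟩
    intro W' hW' hsub
    have h1 : IsWSCOver (necklaceOfPerm π) (Gm (i + i) W') := by
      rw [wscover_reflect i π, Gm_invol]
      exact hW'
    have h2 : W ⊆ Gm (i + i) W' := by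
      have := Finset.image_subset_image (f := Fm (i + i)) hsub
      rwa [← Gm, ← Gm, Gm_invol] at this
    have h3 := hmax _ h1 h2
    rw [← h3, Gm_invol]
  · rintro ⟨hover, hmax⟩
    have hover' : IsWSCOver (necklaceOfPerm π) W := by
      rw [wscover_reflect i π]; exact hover
    refine ⟨hover', ?_⟩
    intro W' hW' hsub
    have h1 := hmax (Gm (i + i) W') ((wscover_reflect i π).mp hW')
      (Finset.image_subset_image hsub)
    have := congrArg (Gm (i + i)) h1
    rwa [Gm_invol, Gm_invol] at this

def reflMWSCEquiv : MWSC (necklaceOfPerm π) ≃ MWSC (necklaceOfPerm (LRop i π)) where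
  toFun W := ⟨Gm (i + i) W.1, (maxwsc_reflect i π).mp W.2⟩
  invFun W := ⟨Gm (i + i) W.1, by
    have h := (maxwsc_reflect i π (W := Gm (i + i) W.1)).mpr
    rw [Gm_invol] at h
    exact h W.2⟩
  left_inv W := by
    apply Subtype.ext
    exact Gm_invol _ W.1
  right_inv W := by
    apply Subtype.ext
    exact Gm_invol _ W.1

lemma iso_main :
    Nonempty (exchangeGraph (necklaceOfPerm π) ≃g
      exchangeGraph (necklaceOfPerm (LRop i π))) := by
  refine ⟨⟨reflMWSCEquiv i π, ?_⟩⟩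
  intro a b
  rw [exchangeGraph, exchangeGraph, SimpleGraph.fromRel_adj, SimpleGraph.fromRel_adj]
  have hwa : IsWSC a.1 := a.2.1.1
  have hwb : IsWSC b.1 := b.2.1.1
  have hwa' : IsWSC (Gm (i + i) a.1) := ((maxwsc_reflect i π).mp a.2).1.1
  have hwb' : IsWSC (Gm (i + i) b.1) := ((maxwsc_reflect i π).mp b.2).1.1
  simp only [reflMWSCEquiv, Equiv.coe_fn_mk, ne_eq, Subtype.mk.injEq]
  constructor
  · rintro ⟨hne, h⟩
    refine ⟨?_, ?_⟩
    · intro hEq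
      apply hne
      rw [hEq]
    · rcases h with h | h
      · have := mutation_reflect (i + i) hwa' h
        rw [Gm_invol, Gm_invol] at this
        exact Or.inr this
      · have := mutation_reflect (i + i) hwb' h
        rw [Gm_invol, Gm_invol] at this
        exact Or.inl this
  · rintro ⟨hne, h⟩
    refine ⟨?_, ?_⟩
    · intro hEq
      apply hne
      apply Subtype.ext
      have := congrArg (Gm (i + i)) hEq
      rwa [Gm_invol, Gm_invol] at this
    · rcases h with h | h
      · exact Or.inr (mutation_reflect (i + i) hwa h)
      · exact Or.inl (mutation_reflect (i + i) hwb h)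

end AuxLR

theorem exchangeGraph_iso_of_LR (n : ℕ) [NeZero n] (hn : 3 ≤ n) (i : Fin n)
    (π : Equiv.Perm (Fin n)) (hπ : IsConnectedPerm π) (hπ' : IsConnectedPerm (LRop i π)) :
    Nonempty (exchangeGraph (necklaceOfPerm π) ≃g exchangeGraph (necklaceOfPerm (LRop i π))) := by
  exact iso_main i π

end WS
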